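/- Let n : ℕ, let A : Matrix (Fin n) (Fin n) ℝ be symmetric (Aᵀ = A), let L = 1 − A, let X : EuclideanSpace ℝ (Fin n), and let c : ℝ with c > −1. Set b = 1/(2*(1+c)) and α = 2*b = 1/(1+c). Define J : EuclideanSpace ℝ (Fin n) → ℝ by J(Y) = ‖Y − X‖² + c * ⟪Y, L.mulVec Y⟫. Then for every Y : EuclideanSpace ℝ (Fin n), Y − b • gradient J Y = α • X + (1 − α) • A.mulVec Y. Moreover, if c ≥ 0 then 0 < α and α ≤ 1. -/

import Mathlib

open Matrix

theorem thgin_pagerank_update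
    (n : ℕ) (A : Matrix (Fin n) (Fin n) ℝ) (hA : Aᵀ = A)
    (L : Matrix (Fin n) (Fin n) ℝ) (hL : L = 1 - A)
    (X : EuclideanSpace ℝ (Fin n)) (c : ℝ) (hc : c > -1)
    (b α : ℝ) (hb : b = 1 / (2 * (1 + c))) (hα : α = 2 * b)
    (J : EuclideanSpace ℝ (Fin n) → ℝ)
    (hJ : J = fun Y : EuclideanSpace ℝ (Fin n) =>
        ‖Y - X‖ ^ 2 +
          c * (inner ℝ Y ((EuclideanSpace.equiv (Fin n) ℝ).symm (L.mulVec Y)) : ℝ)) :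
    (∀ Y : EuclideanSpace ℝ (Fin n),
        Y - b • gradient J Y
          = α • X + (1 - α) • (EuclideanSpace.equiv (Fin n) ℝ).symm (A.mulVec Y)) ∧
      (c ≥ 0 → 0 < α ∧ α ≤ 1) := by
  have h1c : (1 : ℝ) + c ≠ 0 := by linarith
  have hLher : L.IsHermitian := by
    have ht : Lᵀ = L := by rw [hL]; simp [Matrix.transpose_sub, hA]
    simpa [Matrix.IsHermitian, Matrix.conjTranspose_eq_transpose_of_trivial] using ht
  have hsym : (Matrix.toEuclideanLin L).IsSymmetric :=
    Matrix.isHermitian_iff_isSymmetric.mp hLher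
  set M : EuclideanSpace ℝ (Fin n) →L[ℝ] EuclideanSpace ℝ (Fin n) :=
    Matrix.toEuclideanCLM (𝕜 := ℝ) L with hM
  have hMapp : ∀ Y : EuclideanSpace ℝ (Fin n),
      M Y = (EuclideanSpace.equiv (Fin n) ℝ).symm (L.mulVec Y) := fun Y => rfl
  have hMlin : ∀ Y : EuclideanSpace ℝ (Fin n), M Y = Matrix.toEuclideanLin L Y :=
    fun Y => rfl
  have hJ' : J = fun Z : EuclideanSpace ℝ (Fin n) =>
      (inner ℝ (Z - X) (Z - X) : ℝ) + c * (inner ℝ Z (M Z) : ℝ) := by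
    rw [hJ]; funext Z
    rw [real_inner_self_eq_norm_sq, hMapp]
  constructor
  · intro Y
    have hgrad : HasGradientAt J ((2:ℝ) • (Y - X) + (2*c) • (M Y)) Y := by
      rw [hasGradientAt_iff_hasFDerivAt, hJ']
      have hid : HasFDerivAt (fun Z : EuclideanSpace ℝ (Fin n) => Z - X)
          (ContinuousLinearMap.id ℝ _) Y := (hasFDerivAt_id Y).sub_const X
      have h1 := hid.inner ℝ hid
      have h2 := (hasFDerivAt_id Y).inner ℝ (M.hasFDerivAt (x := Y))
      have h := h1.add (h2.const_mul c)
      refine h.congr_fderiv ?_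
      apply ContinuousLinearMap.ext
      intro v
      have hsv : (inner ℝ Y (M v) : ℝ) = (inner ℝ (M Y) v : ℝ) := by
        rw [hMlin, hMlin]; exact (hsym Y v).symm
      simp only [ContinuousLinearMap.add_apply, ContinuousLinearMap.comp_apply,
        ContinuousLinearMap.prod_apply, fderivInnerCLM_apply,
        ContinuousLinearMap.coe_smul', Pi.smul_apply, ContinuousLinearMap.id_apply,
        InnerProductSpace.toDual_apply_apply, ContinuousLinearMap.coe_id', id_eq,
        smul_eq_mul]
      rw [hsv]
      rw [inner_add_left, real_inner_smul_left, real_inner_smul_left,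
        real_inner_comm v (Y - X), real_inner_comm v (M Y)]
      ring
    rw [hgrad.gradient]
    have hMY : M Y = Y - (EuclideanSpace.equiv (Fin n) ℝ).symm (A.mulVec Y) := by
      rw [hMapp, hL, Matrix.sub_mulVec, Matrix.one_mulVec, map_sub]
      rfl
    rw [hMY]
    match_scalars
    · rw [hb]; field_simp; ring
    · rw [hα]; ring
    · rw [hα, hb]; field_simp; ring
  · intro hc0
    have hαval : α = 1 / (1 + c) := by rw [hα, hb]; field_simp
    constructor
    · rw [hαval]; positivity
    · rw [hαval, div_le_one (by linarith)]; linarith
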